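/- Isolation: assuming sequential composition distributes over non-empty meets on the left (conjunctivity), c^ω = c^* ⊓ c^∞, i.e., possibly-infinite iteration is the choice between finite iteration and infinite iteration. -/
import Mathlib


/-- A Concurrent Refinement Algebra over a complete distributive lattice of
commands, ordered by refinement (`⊓` = nondeterministic choice, `⊥` = abort,
`⊤` = magic), with sequential composition `seq` (identity `nil`),
synchronous parallel `par`, weak conjunction `conj`, a Boolean-style
sub-lattice of atomic steps `Atomic` (with `eps` the environment-step identity
of `par`) and a sub-lattice of tests `Test`. -/
structure CRA (C : Type*) [CompleteDistribLattice C] where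
  seq : C → C → C
  par : C → C → C
  conj : C → C → C
  nil : C
  eps : C
  Atomic : C → Prop
  Test : C → Prop
  seq_assoc : ∀ a b c, seq (seq a b) c = seq a (seq b c)
  seq_nil : ∀ c, seq c nil = c
  nil_seq : ∀ c, seq nil c = c
  seq_mono_left : ∀ d : C, Monotone fun c => seq c d
  seq_mono_right : ∀ c : C, Monotone (seq c)
  top_seq : ∀ c, seq ⊤ c = ⊤
  bot_seq : ∀ c, seq ⊥ c = ⊥
  /-- sequential composition distributes over arbitrary choices on the right -/
  seq_sInf_distrib : ∀ (S : Set C) (d : C), seq (sInf S) d = ⨅ c ∈ S, seq c d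
  par_assoc : ∀ a b c, par (par a b) c = par a (par b c)
  par_comm : ∀ a b, par a b = par b a
  /-- parallel distributes over arbitrary choices -/
  par_sInf_distrib : ∀ (c : C) (S : Set C), par c (sInf S) = ⨅ d ∈ S, par c d
  nil_par_nil : par nil nil = nil
  atomic_par : ∀ a b, Atomic a → Atomic b → Atomic (par a b)
  /-- synchronous interchange law for atomic steps -/
  interchange : ∀ a b c d, Atomic a → Atomic b →
    par (seq a c) (seq b d) = seq (par a b) (par c d)
  par_atomic_seq_nil : ∀ a c, Atomic a → par (seq a c) nil = ⊤
  atomic_eps : Atomic eps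
  /-- `eps` is the identity of parallel on atomic steps -/
  eps_par_atomic : ∀ a, Atomic a → par eps a = a
  conj_assoc : ∀ a b c, conj (conj a b) c = conj a (conj b c)
  conj_comm : ∀ a b, conj a b = conj b a
  conj_idem : ∀ a, conj a a = a
  conj_bot : ∀ c, conj c ⊥ = ⊥
  conj_atomic : ∀ a b, Atomic a → Atomic b → conj a b = a ⊔ b
  conj_test : ∀ t t', Test t → Test t' → conj t t' = t ⊔ t'
  conj_interchange : ∀ a b c d, Atomic a → Atomic b →
    conj (seq a c) (seq b d) = seq (conj a b) (conj c d)
  conj_atomic_seq_nil : ∀ a c, Atomic a → conj (seq a c) nil = ⊤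
  conj_sInf_distrib : ∀ (c : C) (S : Set C), S.Nonempty →
    conj c (sInf S) = ⨅ d ∈ S, conj c d
  atomic_conj : ∀ a b, Atomic a → Atomic b → Atomic (conj a b)
  test_nil : Test nil
  test_nil_le : ∀ t, Test t → nil ≤ t
  test_seq_par_interchange : ∀ t t' c d, Test t → Test t' →
    par (seq t c) (seq t' d) = seq (t ⊔ t') (par c d)
  conj_test_interchange : ∀ t t' c d, Test t → Test t' →
    conj (seq t c) (seq t' d) = seq (t ⊔ t') (conj c d)

namespace CRA

variable {C : Type*} [CompleteDistribLattice C] (A : CRA C)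

/-- possibly infinite iteration `c^ω = μ x. nil ⊓ c;x` -/
def omega (c : C) : C :=
  OrderHom.lfp ⟨fun x => A.nil ⊓ A.seq c x,
    fun _ _ h => inf_le_inf_left _ (A.seq_mono_right c h)⟩

/-- finite iteration `c^* = ν x. nil ⊓ c;x` -/
def star (c : C) : C :=
  OrderHom.gfp ⟨fun x => A.nil ⊓ A.seq c x,
    fun _ _ h => inf_le_inf_left _ (A.seq_mono_right c h)⟩

/-- infinite iteration `c^∞ = c^ω ; ⊤` -/
def inft (c : C) : C := A.seq (A.omega c) ⊤

/-- finite powers: `c^0 = nil`, `c^(i+1) = c ; c^i` -/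
def pow (c : C) : ℕ → C
  | 0 => A.nil
  | n + 1 => A.seq c (pow c n)

end CRA

theorem isolation {C : Type*} [CompleteDistribLattice C] (A : CRA C)
    (hconj : ∀ (c : C) (S : Set C), S.Nonempty → A.seq c (sInf S) = ⨅ d ∈ S, A.seq c d) (c : C) :
    A.omega c = A.star c ⊓ A.inft c := by
  classical
  -- The iteration function
  let F : C →o C := ⟨fun x => A.nil ⊓ A.seq c x,
    fun _ _ h => inf_le_inf_left _ (A.seq_mono_right c h)⟩
  have homega : A.omega c = OrderHom.lfp F := rfl
  have hstar : A.star c = OrderHom.gfp F := rfl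
  -- binary distributivity (right)
  have hseq_inf : ∀ a b d : C, A.seq (a ⊓ b) d = A.seq a d ⊓ A.seq b d := by
    intro a b d
    have h := A.seq_sInf_distrib {a, b} d
    rw [sInf_pair, iInf_pair] at h
    exact h
  -- binary conjunctivity (left)
  have hconj2 : ∀ a b : C, A.seq c (a ⊓ b) = A.seq c a ⊓ A.seq c b := by
    intro a b
    have h := hconj c {a, b} ⟨a, by simp⟩
    rw [sInf_pair, iInf_pair] at h
    exact h
  -- fixed point equations
  have hofix : A.nil ⊓ A.seq c (A.omega c) = A.omega c := OrderHom.map_lfp F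
  have hsfix : A.nil ⊓ A.seq c (A.star c) = A.star c := OrderHom.map_gfp F
  -- the pure infinite iteration L = lfp (c;·)
  let G : C →o C := ⟨fun x => A.seq c x, A.seq_mono_right c⟩
  set L := OrderHom.lfp G with hLdef
  have hLfix : A.seq c L = L := OrderHom.map_lfp G
  -- L;⊥ = L
  have hLbot : A.seq L ⊥ = L := by
    have h1 : L ≤ A.seq L ⊥ := by
      apply OrderHom.lfp_le
      show A.seq c (A.seq L ⊥) ≤ A.seq L ⊥
      rw [← A.seq_assoc, hLfix]
    have h2 : A.seq L ⊥ ≤ L := by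
      calc A.seq L ⊥ ≤ A.seq L A.nil := A.seq_mono_right L bot_le
        _ = L := A.seq_nil L
    exact le_antisymm h2 h1
  -- hence L;⊤ = L
  have hLtop : A.seq L ⊤ = L := by
    conv_lhs => rw [← hLbot]
    rw [A.seq_assoc, A.bot_seq, hLbot]
  -- nil ⊓ L is a prefixed point of F, so omega ≤ nil ⊓ L
  have h3 : A.omega c ≤ A.nil ⊓ L := by
    rw [homega]
    apply OrderHom.lfp_le
    show A.nil ⊓ A.seq c (A.nil ⊓ L) ≤ A.nil ⊓ L
    rw [hconj2, A.seq_nil, hLfix]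
    exact inf_le_inf_left _ inf_le_right
  -- hence inft ≤ L
  have h4 : A.inft c ≤ L := by
    calc A.inft c = A.seq (A.omega c) ⊤ := rfl
      _ ≤ A.seq (A.nil ⊓ L) ⊤ := A.seq_mono_left ⊤ h3
      _ = A.seq A.nil ⊤ ⊓ A.seq L ⊤ := hseq_inf A.nil L ⊤
      _ = ⊤ ⊓ L := by rw [A.nil_seq, hLtop]
      _ = L := top_inf_eq L
  -- the Galois element Z
  set Z := sSup {z : C | A.star c ⊓ z ≤ A.omega c} with hZdef
  have hZle : A.star c ⊓ Z ≤ A.omega c := by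
    rw [hZdef, inf_sSup_eq]
    exact iSup₂_le fun z hz => hz
  have hGZ : A.seq c Z ≤ Z := by
    apply le_sSup
    show A.star c ⊓ A.seq c Z ≤ A.omega c
    calc A.star c ⊓ A.seq c Z
        = (A.nil ⊓ A.seq c (A.star c)) ⊓ A.seq c Z := by rw [hsfix]
      _ = A.nil ⊓ (A.seq c (A.star c) ⊓ A.seq c Z) := inf_assoc _ _ _
      _ = A.nil ⊓ A.seq c (A.star c ⊓ Z) := by rw [hconj2]
      _ ≤ A.nil ⊓ A.seq c (A.omega c) :=
          inf_le_inf_left _ (A.seq_mono_right c hZle)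
      _ = A.omega c := hofix
  have hLZ : L ≤ Z := by
    rw [hLdef]
    exact OrderHom.lfp_le (f := G) hGZ
  -- conclude
  apply le_antisymm
  · refine le_inf ?_ ?_
    · rw [homega, hstar]
      exact OrderHom.le_gfp (f := F) (le_of_eq (OrderHom.map_lfp F).symm)
    · calc A.omega c = A.seq (A.omega c) A.nil := (A.seq_nil _).symm
        _ ≤ A.seq (A.omega c) ⊤ := A.seq_mono_right _ le_top
        _ = A.inft c := rfl
  · calc A.star c ⊓ A.inft c ≤ A.star c ⊓ L := inf_le_inf_left _ h4
      _ ≤ A.star c ⊓ Z := inf_le_inf_left _ hLZ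
      _ ≤ A.omega c := hZle
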